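/- (Mean value theorem) Let f, g : ℝ → ℝ, α > 0, β > 0, and a, b ∈ ℝ with b ∈ A := {a + kα : k ∈ ℕ₀} and a ∈ B := {b − kβ : k ∈ ℕ₀}. Suppose f and g are α,β-symmetric integrable on [a,b], f is bounded with m := inf_{t∈ℝ} f(t) and M := sup_{t∈ℝ} f(t), and g(t) ≥ 0 for all t ∈ ℝ. Then the product f·g is α,β-symmetric integrable on [a,b] and there exists K ∈ ℝ with m ≤ K ≤ M such that ∫_a^b f(t)·g(t) d_{α,β}t = K·∫_a^b g(t) d_{α,β}t. -/

import Mathlib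

/-- The α-forward integral (Nörlund sum) of `f` from `a` to `b`:
`∫_a^b f(t) Δ_α t = α·∑_{k=0}^∞ f(a+kα) − α·∑_{k=0}^∞ f(b+kα)`. -/
noncomputable def deltaInt (α : ℝ) (f : ℝ → ℝ) (a b : ℝ) : ℝ :=
  α * ∑' k : ℕ, f (a + k * α) - α * ∑' k : ℕ, f (b + k * α)

/-- `f` is α-forward integrable on `[a,b]`: both defining series converge. -/
def ForwardIntegrable (α : ℝ) (f : ℝ → ℝ) (a b : ℝ) : Prop :=
  Summable (fun k : ℕ => f (a + k * α)) ∧ Summable (fun k : ℕ => f (b + k * α))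

/-- The β-backward integral of `f` from `a` to `b`:
`∫_a^b f(t) ∇_β t = β·∑_{k=0}^∞ f(b−kβ) − β·∑_{k=0}^∞ f(a−kβ)`. -/
noncomputable def nablaInt (β : ℝ) (f : ℝ → ℝ) (a b : ℝ) : ℝ :=
  β * ∑' k : ℕ, f (b - k * β) - β * ∑' k : ℕ, f (a - k * β)

/-- `f` is β-backward integrable on `[a,b]`: both defining series converge. -/
def BackwardIntegrable (β : ℝ) (f : ℝ → ℝ) (a b : ℝ) : Prop :=
  Summable (fun k : ℕ => f (a - k * β)) ∧ Summable (fun k : ℕ => f (b - k * β))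

/-- `f` is α,β-symmetric integrable on `[a,b]`. -/
def SymIntegrable (α β : ℝ) (f : ℝ → ℝ) (a b : ℝ) : Prop :=
  ForwardIntegrable α f a b ∧ BackwardIntegrable β f a b

/-- The α,β-symmetric integral of `f` from `a` to `b`. -/
noncomputable def symInt (α β : ℝ) (f : ℝ → ℝ) (a b : ℝ) : ℝ :=
  (α / (α + β)) * deltaInt α f a b + (β / (α + β)) * nablaInt β f a b


lemma aux_summable_mul (v w : ℕ → ℝ) (m M : ℝ) (h1 : ∀ k, m ≤ v k) (h2 : ∀ k, v k ≤ M)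
    (h0 : ∀ k, 0 ≤ w k) (hw : Summable w) : Summable (fun k => v k * w k) := by
  have hs : Summable (fun k => v k * w k - m * w k) :=
    Summable.of_nonneg_of_le (f := fun k => (M - m) * w k)
      (fun k => by nlinarith [h0 k, h1 k]) (fun k => by nlinarith [mul_nonneg (sub_nonneg.2 (h2 k)) (h0 k)])
      (hw.mul_left (M - m))
  have := hs.add (hw.mul_left m)
  exact this.congr (fun k => by ring)

lemma aux_deltaInt_eq (α : ℝ) (h : ℝ → ℝ) (a b : ℝ) (n : ℕ) (hb : b = a + n * α)
    (hs : Summable (fun k : ℕ => h (a + k * α))) :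
    deltaInt α h a b = α * ∑ k ∈ Finset.range n, h (a + k * α) := by
  have key : ∑ k ∈ Finset.range n, h (a + k * α) + ∑' k : ℕ, h (a + (k + n) * α)
      = ∑' k : ℕ, h (a + k * α) := by
    have := Summable.sum_add_tsum_nat_add n hs
    simpa using this
  have heq : (fun k : ℕ => h (b + k * α)) = fun k : ℕ => h (a + (k + n) * α) := by
    funext k; rw [hb]; ring_nf
  rw [deltaInt, heq]
  rw [← key]; ring

lemma aux_nablaInt_eq (β : ℝ) (h : ℝ → ℝ) (a b : ℝ) (n : ℕ) (ha : a = b - n * β)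
    (hs : Summable (fun k : ℕ => h (b - k * β))) :
    nablaInt β h a b = β * ∑ k ∈ Finset.range n, h (b - k * β) := by
  have key : ∑ k ∈ Finset.range n, h (b - k * β) + ∑' k : ℕ, h (b - (k + n) * β)
      = ∑' k : ℕ, h (b - k * β) := by
    have := Summable.sum_add_tsum_nat_add n hs
    simpa using this
  have heq : (fun k : ℕ => h (a - k * β)) = fun k : ℕ => h (b - (k + n) * β) := by
    funext k; rw [ha]; ring_nf
  rw [nablaInt, heq]
  rw [← key]; ring

theorem sym_integral_mean_value (f g : ℝ → ℝ) (α β : ℝ) (hα : 0 < α) (hβ : 0 < β)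
    (a b : ℝ) (hbA : ∃ k : ℕ, b = a + k * α) (haB : ∃ k : ℕ, a = b - k * β)
    (hf : SymIntegrable α β f a b) (hg : SymIntegrable α β g a b)
    (hbdd : BddBelow (Set.range f) ∧ BddAbove (Set.range f))
    (hg0 : ∀ t : ℝ, 0 ≤ g t) :
    SymIntegrable α β (fun t => f t * g t) a b ∧
    ∃ K : ℝ, sInf (Set.range f) ≤ K ∧ K ≤ sSup (Set.range f) ∧
      symInt α β (fun t => f t * g t) a b = K * symInt α β g a b := by
  obtain ⟨n, hn⟩ := hbA
  obtain ⟨nb, hnb⟩ := haB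
  obtain ⟨⟨⟨hfa, hfb⟩, ⟨hfa', hfb'⟩⟩, ⟨⟨hga, hgb⟩, ⟨hga', hgb'⟩⟩⟩ := And.intro hf hg
  set m := sInf (Set.range f) with hm
  set M := sSup (Set.range f) with hM
  have hml : ∀ t, m ≤ f t := fun t => csInf_le hbdd.1 ⟨t, rfl⟩
  have hMl : ∀ t, f t ≤ M := fun t => le_csSup hbdd.2 ⟨t, rfl⟩
  have hmM : m ≤ M := (hml 0).trans (hMl 0)
  -- integrability
  have s1 : Summable (fun k : ℕ => f (a + k * α) * g (a + k * α)) :=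
    aux_summable_mul _ _ m M (fun k => hml _) (fun k => hMl _) (fun k => hg0 _) hga
  have s2 : Summable (fun k : ℕ => f (b + k * α) * g (b + k * α)) :=
    aux_summable_mul _ _ m M (fun k => hml _) (fun k => hMl _) (fun k => hg0 _) hgb
  have s3 : Summable (fun k : ℕ => f (a - k * β) * g (a - k * β)) :=
    aux_summable_mul _ _ m M (fun k => hml _) (fun k => hMl _) (fun k => hg0 _) hga'
  have s4 : Summable (fun k : ℕ => f (b - k * β) * g (b - k * β)) :=
    aux_summable_mul _ _ m M (fun k => hml _) (fun k => hMl _) (fun k => hg0 _) hgb'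
  refine ⟨⟨⟨s1, s2⟩, s3, s4⟩, ?_⟩
  -- finite-sum forms
  have dg := aux_deltaInt_eq α g a b n hn hga
  have ng := aux_nablaInt_eq β g a b nb hnb hgb'
  have dfg := aux_deltaInt_eq α (fun t => f t * g t) a b n hn s1
  have nfg := aux_nablaInt_eq β (fun t => f t * g t) a b nb hnb s4
  set Sg : ℝ := ∑ k ∈ Finset.range n, g (a + k * α) with hSg
  set Tg : ℝ := ∑ k ∈ Finset.range nb, g (b - k * β) with hTg
  have hSg0 : 0 ≤ Sg := Finset.sum_nonneg (fun k _ => hg0 _)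
  have hTg0 : 0 ≤ Tg := Finset.sum_nonneg (fun k _ => hg0 _)
  have hab : 0 < α + β := by linarith
  set G := symInt α β g a b with hG
  set I := symInt α β (fun t => f t * g t) a b with hI
  have hGval : G = (α / (α + β)) * (α * Sg) + (β / (α + β)) * (β * Tg) := by
    rw [hG, symInt, dg, ng]
  have hIval : I = (α / (α + β)) * (α * ∑ k ∈ Finset.range n, f (a + k * α) * g (a + k * α))
      + (β / (α + β)) * (β * ∑ k ∈ Finset.range nb, f (b - k * β) * g (b - k * β)) := by
    rw [hI, symInt, dfg, nfg]
  have hG0 : 0 ≤ G := by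
    rw [hGval]
    have h1 : 0 ≤ α / (α + β) := by positivity
    have h2 : 0 ≤ β / (α + β) := by positivity
    nlinarith [mul_nonneg h1 (mul_nonneg hα.le hSg0), mul_nonneg h2 (mul_nonneg hβ.le hTg0)]
  have hlow : m * G ≤ I := by
    rw [hGval, hIval]
    have h1 : 0 ≤ α / (α + β) := by positivity
    have h2 : 0 ≤ β / (α + β) := by positivity
    have e1 : m * Sg ≤ ∑ k ∈ Finset.range n, f (a + k * α) * g (a + k * α) := by
      rw [hSg, Finset.mul_sum]
      exact Finset.sum_le_sum (fun k _ => mul_le_mul_of_nonneg_right (hml _) (hg0 _))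
    have e2 : m * Tg ≤ ∑ k ∈ Finset.range nb, f (b - k * β) * g (b - k * β) := by
      rw [hTg, Finset.mul_sum]
      exact Finset.sum_le_sum (fun k _ => mul_le_mul_of_nonneg_right (hml _) (hg0 _))
    nlinarith [mul_le_mul_of_nonneg_left e1 (mul_nonneg h1 hα.le),
      mul_le_mul_of_nonneg_left e2 (mul_nonneg h2 hβ.le)]
  have hhigh : I ≤ M * G := by
    rw [hGval, hIval]
    have h1 : 0 ≤ α / (α + β) := by positivity
    have h2 : 0 ≤ β / (α + β) := by positivity
    have e1 : ∑ k ∈ Finset.range n, f (a + k * α) * g (a + k * α) ≤ M * Sg := by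
      rw [hSg, Finset.mul_sum]
      exact Finset.sum_le_sum (fun k _ => mul_le_mul_of_nonneg_right (hMl _) (hg0 _))
    have e2 : ∑ k ∈ Finset.range nb, f (b - k * β) * g (b - k * β) ≤ M * Tg := by
      rw [hTg, Finset.mul_sum]
      exact Finset.sum_le_sum (fun k _ => mul_le_mul_of_nonneg_right (hMl _) (hg0 _))
    nlinarith [mul_le_mul_of_nonneg_left e1 (mul_nonneg h1 hα.le),
      mul_le_mul_of_nonneg_left e2 (mul_nonneg h2 hβ.le)]
  by_cases hGz : G = 0
  · refine ⟨m, le_refl _, hmM, ?_⟩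
    have : I = 0 := le_antisymm (by rw [hGz] at hhigh; simpa using hhigh)
      (by rw [hGz] at hlow; simpa using hlow)
    rw [this, hGz]; ring
  · have hGpos : 0 < G := lt_of_le_of_ne hG0 (Ne.symm hGz)
    refine ⟨I / G, ?_, ?_, ?_⟩
    · rw [le_div_iff₀ hGpos]; exact hlow
    · rw [div_le_iff₀ hGpos]; exact hhigh
    · rw [div_mul_cancel₀ I hGz]
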